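/- Let a > b > 0. For each n, let (Z_1^n, …, Z_n^n) be independent random variables with Z_i^n distributed as Geometric on ℕ_0 with success probability 1 − ρ_i^{(n)}, where ρ_i^{(n)} = Π_{j=i}^n (1 − a·n^{−3/2} + b·n^{−1/2}·1_{\{j=1\}}). Then the scaled vector (Z_1^n/√n, Z_2^n/√n, …), viewed as a random element of ℝ_+^∞ (padded with zeros), converges in distribution, in the product topology, to the product measure Exp(a−b) ⊗ Exp(a) ⊗ Exp(a) ⊗ ⋯. -/

import Mathlib

open Filter Finset MeasureTheory
open scoped ENNReal

section SGGAux
open Real ProbabilityTheory Set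
open scoped Topology


lemma SGG.expMeasure_Ici {r s : ℝ} (hr : 0 < r) (hs : 0 ≤ s) :
    expMeasure r (Ici s) = ENNReal.ofReal (Real.exp (-(r * s))) := by
  have hprob : IsProbabilityMeasure (expMeasure r) := isProbabilityMeasure_expMeasure hr
  have hIic : expMeasure r (Iic s) = ENNReal.ofReal (1 - Real.exp (-(r * s))) := by
    rw [expMeasure, gammaMeasure, withDensity_apply _ measurableSet_Iic]
    have : ∀ x, gammaPDF 1 r x = exponentialPDF r x := fun x => rfl
    simp_rw [this]
    rw [lintegral_exponentialPDF_eq_antiDeriv hr, if_pos hs]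
  have hsing : expMeasure r {s} = 0 := by
    rw [expMeasure, gammaMeasure, withDensity_apply _ (measurableSet_singleton s)]
    rw [setLIntegral_measure_zero _ _ (measure_singleton s)]
  have hIio : expMeasure r (Iio s) = ENNReal.ofReal (1 - Real.exp (-(r * s))) := by
    have : expMeasure r (Iic s) = expMeasure r (Iio s) + expMeasure r {s} := by
      rw [← measure_union (by simp) (measurableSet_singleton s), (show Set.Iio s ∪ {s} = Set.Iic s by ext x; simp [le_iff_lt_or_eq])]
    rw [hsing, add_zero] at this
    rw [← this, hIic]
  have : expMeasure r (Ici s) = 1 - expMeasure r (Iio s) := by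
    rw [← compl_Iio, measure_compl measurableSet_Iio (measure_ne_top _ _), measure_univ]
  rw [this, hIio, ← ENNReal.ofReal_one, ← ENNReal.ofReal_sub _ (by
    have := Real.exp_le_one_iff.2 (by nlinarith : -(r*s) ≤ 0); linarith [Real.exp_pos (-(r*s))] )]
  norm_num

lemma SGG.tendsto_log_one_add_div : Tendsto (fun x : ℝ => Real.log (1 + x) / x) (𝓝[≠] (0:ℝ)) (𝓝 1) := by
  have h : HasDerivAt (fun x : ℝ => Real.log (1 + x)) 1 0 := by
    have := (((hasDerivAt_id (0:ℝ)).const_add 1).log (by norm_num))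
    simpa using this
  have := hasDerivAt_iff_tendsto_slope.1 h
  refine this.congr (fun x => ?_)
  simp [slope_def_field, Real.log_one]

lemma SGG.tendsto_mul_log_one_add {u s : ℕ → ℝ} {L : ℝ}
    (hu : Tendsto u atTop (𝓝 0)) (hne : ∀ᶠ n in atTop, u n ≠ 0)
    (hsu : Tendsto (fun n => s n * u n) atTop (𝓝 L)) :
    Tendsto (fun n => s n * Real.log (1 + u n)) atTop (𝓝 L) := by
  have h0 : Tendsto u atTop (𝓝[≠] (0:ℝ)) :=
    tendsto_nhdsWithin_iff.2 ⟨hu, hne.mono fun n h => h⟩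
  have h1 := SGG.tendsto_log_one_add_div.comp h0
  have h2 := h1.mul hsu
  rw [one_mul] at h2
  refine h2.congr' (hne.mono fun n h => ?_)
  simp only [Function.comp_apply]
  field_simp

lemma SGG.rpow32 {n : ℕ} (hn : 1 ≤ n) : (n:ℝ) ^ ((3:ℝ)/2) = n * Real.sqrt n := by
  have h0 : (0:ℝ) < n := by exact_mod_cast hn
  rw [show (3:ℝ)/2 = 1 + 1/2 by norm_num, Real.rpow_add h0, Real.rpow_one, Real.sqrt_eq_rpow]

noncomputable def SGG.rho (a b : ℝ) (n i : ℕ) : ℝ :=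
  ∏ j ∈ Finset.Icc i n,
    (1 - a / (n : ℝ) ^ ((3 : ℝ) / 2) + if j = 1 then b / Real.sqrt n else 0)

noncomputable def SGG.cc (a b : ℝ) (n i : ℕ) : ℝ := -Real.log (SGG.rho a b n (i + 1))

noncomputable def SGG.th (a b : ℝ) (i : ℕ) : ℝ := if i = 0 then a - b else a

lemma SGG.tendsto_rpow32 : Tendsto (fun n : ℕ => (n:ℝ) ^ ((3:ℝ)/2)) atTop atTop :=
  (tendsto_rpow_atTop (by norm_num)).comp tendsto_natCast_atTop_atTop

lemma SGG.tendsto_eps (a : ℝ) :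
    Tendsto (fun n : ℕ => a / (n:ℝ) ^ ((3:ℝ)/2)) atTop (𝓝 0) := by
  have h := SGG.tendsto_rpow32.inv_tendsto_atTop.const_mul a
  rw [mul_zero] at h
  exact h.congr (fun n => by simp [div_eq_mul_inv])

lemma SGG.tendsto_sub_div (i : ℕ) :
    Tendsto (fun n : ℕ => ((n - i : ℕ) : ℝ) / n) atTop (𝓝 1) := by
  have h : Tendsto (fun n : ℕ => 1 - (i:ℝ) / n) atTop (𝓝 1) := by
    have := tendsto_const_div_atTop_nhds_zero_nat (i:ℝ)
    have h2 := (tendsto_const_nhds (α := ℕ) (f := atTop) (x := (1:ℝ))).sub this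
    simpa using h2
  refine h.congr' ?_
  filter_upwards [eventually_ge_atTop (max 1 i)] with n hn
  have hi : i ≤ n := le_trans (le_max_right _ _) hn
  have h1 : (1:ℕ) ≤ n := le_trans (le_max_left _ _) hn
  have hn0 : (n:ℝ) ≠ 0 := by positivity
  rw [Nat.cast_sub hi]
  field_simp

lemma SGG.P (a : ℝ) (ha : a ≠ 0) (i : ℕ) :
    Tendsto (fun n : ℕ =>
      -(((n - i : ℕ):ℝ) * Real.sqrt n * Real.log (1 - a/(n:ℝ)^((3:ℝ)/2))))
      atTop (𝓝 a) := by
  have hu : Tendsto (fun n : ℕ => -(a/(n:ℝ)^((3:ℝ)/2))) atTop (𝓝 0) := by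
    simpa using (SGG.tendsto_eps a).neg
  have hne : ∀ᶠ n : ℕ in atTop, -(a/(n:ℝ)^((3:ℝ)/2)) ≠ 0 := by
    filter_upwards [eventually_ge_atTop 1] with n hn
    have h0 : (0:ℝ) < (n:ℝ)^((3:ℝ)/2) := by
      have : (0:ℝ) < (n:ℝ) := by exact_mod_cast hn
      positivity
    simp only [ne_eq, neg_eq_zero, div_eq_zero_iff]
    push_neg
    exact ⟨ha, ne_of_gt h0⟩
  have hsu : Tendsto (fun n : ℕ =>
      (-(((n - i : ℕ):ℝ) * Real.sqrt n)) * (-(a/(n:ℝ)^((3:ℝ)/2)))) atTop (𝓝 a) := by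
    have h := (SGG.tendsto_sub_div i).const_mul a
    rw [mul_one] at h
    refine h.congr' ?_
    filter_upwards [eventually_ge_atTop 1] with n hn
    have h0 : (0:ℝ) < (n:ℝ) := by exact_mod_cast hn
    have hs : Real.sqrt n ≠ 0 := ne_of_gt (Real.sqrt_pos.2 h0)
    have h32 : (n:ℝ) ^ ((3:ℝ)/2) = n * Real.sqrt n := SGG.rpow32 hn
    rw [h32, neg_mul_neg]
    field_simp
  have := SGG.tendsto_mul_log_one_add hu hne hsu
  refine this.congr (fun n => ?_)
  rw [show (1:ℝ) + -(a/(n:ℝ)^((3:ℝ)/2)) = 1 - a/(n:ℝ)^((3:ℝ)/2) by ring]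
  ring

lemma SGG.ev_eps (a : ℝ) : ∀ᶠ n : ℕ in atTop, a / (n:ℝ)^((3:ℝ)/2) < 1/2 := by
  have := (SGG.tendsto_eps a).eventually (gt_mem_nhds (show (0:ℝ) < 1/2 by norm_num))
  exact this

lemma SGG.rho_one_eq {a b : ℝ} {n : ℕ} (hn : 1 ≤ n) :
    SGG.rho a b n 1 = (1 - a/(n:ℝ)^((3:ℝ)/2) + b / Real.sqrt n)
      * (1 - a/(n:ℝ)^((3:ℝ)/2)) ^ (n - 1) := by
  rw [SGG.rho, ← Finset.mul_prod_erase _ _ (Finset.mem_Icc.2 ⟨le_refl 1, hn⟩),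
    Finset.Icc_erase_left]
  have h2 : ∀ j ∈ Finset.Ioc 1 n,
      (1 - a / (n : ℝ) ^ ((3 : ℝ) / 2) + if j = 1 then b / Real.sqrt n else 0)
        = 1 - a / (n : ℝ) ^ ((3 : ℝ) / 2) := by
    intro j hj
    have : j ≠ 1 := by have := (Finset.mem_Ioc.1 hj).1; omega
    simp [this]
  rw [Finset.prod_congr rfl h2, Finset.prod_const, Nat.card_Ioc]
  norm_num

lemma SGG.rho_succ_eq {a b : ℝ} {n i : ℕ} (hi : 1 ≤ i) :
    SGG.rho a b n (i + 1) = (1 - a/(n:ℝ)^((3:ℝ)/2)) ^ (n - i) := by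
  have h2 : ∀ j ∈ Finset.Icc (i+1) n,
      (1 - a / (n : ℝ) ^ ((3 : ℝ) / 2) + if j = 1 then b / Real.sqrt n else 0)
        = 1 - a / (n : ℝ) ^ ((3 : ℝ) / 2) := by
    intro j hj
    have : j ≠ 1 := by have := (Finset.mem_Icc.1 hj).1; omega
    simp [this]
  rw [SGG.rho, Finset.prod_congr rfl h2, Finset.prod_const, Nat.card_Icc]
  congr 1
  omega

lemma SGG.K1 (a b : ℝ) (hb : 0 < b) (hab : b < a) (i : ℕ) :
    Tendsto (fun n : ℕ => Real.sqrt n * SGG.cc a b n i) atTop (𝓝 (SGG.th a b i)) := by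
  have ha : 0 < a := hb.trans hab
  rcases Nat.eq_zero_or_pos i with hi | hi
  · subst hi
    have hP := SGG.P a (ne_of_gt ha) 1
    set u : ℕ → ℝ := fun n => b / Real.sqrt n - a/(n:ℝ)^((3:ℝ)/2) with hu_def
    have hsqrt : Tendsto (fun n : ℕ => Real.sqrt n) atTop atTop :=
      by
        have h := (tendsto_rpow_atTop (by norm_num : (0:ℝ) < 1/2)).comp
          (tendsto_natCast_atTop_atTop (R := ℝ))
        exact h.congr (fun n => (Real.sqrt_eq_rpow _).symm)
    have hbdiv : Tendsto (fun n : ℕ => b / Real.sqrt n) atTop (𝓝 0) := by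
      have h := hsqrt.inv_tendsto_atTop.const_mul b
      rw [mul_zero] at h
      exact h.congr (fun n => by simp [div_eq_mul_inv])
    have hu0 : Tendsto u atTop (𝓝 0) := by
      have := hbdiv.sub (SGG.tendsto_eps a)
      simpa using this
    have hba : Tendsto (fun n : ℕ => b - a / n) atTop (𝓝 b) := by
      have := (tendsto_const_nhds (α := ℕ) (f := atTop) (x := b)).sub
        (tendsto_const_div_atTop_nhds_zero_nat a)
      simpa using this
    have hba_pos : ∀ᶠ n : ℕ in atTop, 0 < b - a / n :=
      hba.eventually (lt_mem_nhds hb)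
    have hueq : ∀ᶠ n : ℕ in atTop, u n = (b - a / n) / Real.sqrt n := by
      filter_upwards [eventually_ge_atTop 1] with n hn
      have h0 : (0:ℝ) < (n:ℝ) := by exact_mod_cast hn
      have hs : Real.sqrt n ≠ 0 := ne_of_gt (Real.sqrt_pos.2 h0)
      simp only [hu_def]
      have h32 : (n:ℝ) ^ ((3:ℝ)/2) = n * Real.sqrt n := SGG.rpow32 hn
      have hsq : Real.sqrt n * Real.sqrt n = (n:ℝ) := Real.mul_self_sqrt h0.le
      rw [h32]
      field_simp
    have hupos : ∀ᶠ n : ℕ in atTop, 0 < u n := by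
      filter_upwards [hba_pos, hueq, eventually_ge_atTop 1] with n h1 h2 h3
      have h0 : (0:ℝ) < (n:ℝ) := by exact_mod_cast h3
      rw [h2]; exact div_pos h1 (Real.sqrt_pos.2 h0)
    have hne : ∀ᶠ n : ℕ in atTop, u n ≠ 0 := hupos.mono fun n h => ne_of_gt h
    have hsu : Tendsto (fun n : ℕ => (-Real.sqrt n) * u n) atTop (𝓝 (-b)) := by
      have h := hba.neg
      refine h.congr' ?_
      filter_upwards [hueq, eventually_ge_atTop 1] with n h2 h3
      have h0 : (0:ℝ) < (n:ℝ) := by exact_mod_cast h3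
      have hs : Real.sqrt n ≠ 0 := ne_of_gt (Real.sqrt_pos.2 h0)
      rw [h2]
      field_simp
    have h1 : Tendsto (fun n : ℕ => (-Real.sqrt n) * Real.log (1 + u n)) atTop (𝓝 (-b)) :=
      SGG.tendsto_mul_log_one_add hu0 hne hsu
    have hsum := h1.add hP
    have : SGG.th a b 0 = -b + a := by simp [SGG.th]; ring
    rw [this]
    refine hsum.congr' ?_
    filter_upwards [SGG.ev_eps a, hupos, eventually_ge_atTop 1] with n heps hup hn1
    have h0 : (0:ℝ) < (n:ℝ) := by exact_mod_cast hn1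
    have heps' : 0 < 1 - a/(n:ℝ)^((3:ℝ)/2) := by linarith
    have hF1 : (0:ℝ) < 1 + u n := by linarith
    have hF1' : 1 - a/(n:ℝ)^((3:ℝ)/2) + b / Real.sqrt n = 1 + u n := by rw [hu_def]; ring
    rw [SGG.cc, SGG.rho_one_eq hn1, hF1',
      Real.log_mul (ne_of_gt hF1) (pow_ne_zero _ (ne_of_gt heps')), Real.log_pow]
    push_cast
    ring
  · have hP := SGG.P a (ne_of_gt ha) i
    have hth : SGG.th a b i = a := by simp [SGG.th, Nat.pos_iff_ne_zero.1 hi]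
    rw [hth]
    refine hP.congr' ?_
    filter_upwards [eventually_ge_atTop 1] with n hn1
    rw [SGG.cc, SGG.rho_succ_eq hi, Real.log_pow]
    ring

lemma SGG.ev_sqrt_pos : ∀ᶠ n : ℕ in atTop, 0 < Real.sqrt n := by
  filter_upwards [eventually_ge_atTop 1] with n hn
  exact Real.sqrt_pos.2 (by exact_mod_cast hn)

lemma SGG.ev_cc_pos {θ : ℝ} (hθ : 0 < θ) {c : ℕ → ℝ}
    (hc : Tendsto (fun n : ℕ => Real.sqrt n * c n) atTop (𝓝 θ)) :
    ∀ᶠ n : ℕ in atTop, 0 < c n := by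
  filter_upwards [hc.eventually (lt_mem_nhds hθ), SGG.ev_sqrt_pos] with n hn hs
  nlinarith

lemma SGG.coord_tendsto {θ y : ℝ} (hθ : 0 < θ) (hy : 0 ≤ y) {c : ℕ → ℝ}
    (hc : Tendsto (fun n : ℕ => Real.sqrt n * c n) atTop (𝓝 θ)) :
    Tendsto (fun n : ℕ => (⌊θ * y / c n⌋₊ : ℝ) / Real.sqrt n) atTop (𝓝 y) := by
  have hcpos := SGG.ev_cc_pos hθ hc
  have hq : Tendsto (fun n : ℕ => θ * y / (Real.sqrt n * c n)) atTop (𝓝 y) := by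
    have h := (tendsto_const_nhds (α := ℕ) (f := atTop) (x := θ * y)).div hc (ne_of_gt hθ)
    have hyy : θ * y / θ = y := by field_simp
    rwa [hyy] at h
  have hinv : Tendsto (fun n : ℕ => (Real.sqrt n)⁻¹) atTop (𝓝 0) := by
    have h := (tendsto_rpow_atTop (by norm_num : (0:ℝ) < 1/2)).comp
      (tendsto_natCast_atTop_atTop (R := ℝ))
    exact (h.congr (fun n => (Real.sqrt_eq_rpow _).symm)).inv_tendsto_atTop
  have hlow : Tendsto (fun n : ℕ => θ * y / (Real.sqrt n * c n) - (Real.sqrt n)⁻¹)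
      atTop (𝓝 y) := by
    have := hq.sub hinv
    simpa using this
  refine tendsto_of_tendsto_of_tendsto_of_le_of_le' hlow hq ?_ ?_
  · filter_upwards [hcpos, SGG.ev_sqrt_pos] with n hcn hsn
    have h1 : θ * y / c n - 1 ≤ (⌊θ * y / c n⌋₊ : ℝ) := by
      linarith [Nat.lt_floor_add_one (θ * y / c n)]
    have e1 : θ * y / (Real.sqrt n * c n) - (Real.sqrt n)⁻¹
        = (θ * y / c n - 1) / Real.sqrt n := by
      rw [sub_div, div_div, mul_comm (c n) (Real.sqrt (n:ℝ)), one_div]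
    rw [e1, div_le_div_iff_of_pos_right hsn]
    exact h1
  · filter_upwards [hcpos, SGG.ev_sqrt_pos] with n hcn hsn
    have hr : 0 ≤ θ * y / c n := div_nonneg (by positivity) hcn.le
    have e1 : θ * y / (Real.sqrt n * c n) = (θ * y / c n) / Real.sqrt n := by
      rw [div_div, mul_comm (c n) (Real.sqrt (n:ℝ))]
    rw [e1, div_le_div_iff_of_pos_right hsn]
    exact Nat.floor_le hr

lemma SGG.ev_rho_pos (a b : ℝ) (hb : 0 < b) :
    ∀ᶠ n : ℕ in atTop, ∀ i, 0 < SGG.rho a b n i := by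
  filter_upwards [SGG.ev_eps a, eventually_ge_atTop 1] with n heps hn1 i
  refine Finset.prod_pos fun j hj => ?_
  have hb' : 0 ≤ b / Real.sqrt n := div_nonneg hb.le (Real.sqrt_nonneg _)
  by_cases h : j = 1 <;> simp only [h, if_true, if_false, ite_true, ite_false] <;> simp [h] <;> linarith

lemma SGG.ceil_tail {s t : ℝ} (hs : 0 < s) (N : ℕ) :
    t ≤ (N:ℝ) / s ↔ ⌈s * t⌉₊ ≤ N := by
  rw [Nat.ceil_le, mul_comm, ← le_div_iff₀ hs]

lemma SGG.floor_tail {θ c x : ℝ} (hθ : 0 < θ) (hc : 0 < c) {m : ℕ} (hm : 1 ≤ m) :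
    (m ≤ ⌊θ * x / c⌋₊) ↔ (m : ℝ) * c / θ ≤ x := by
  constructor
  · intro h
    have h1 : 0 < ⌊θ * x / c⌋₊ := lt_of_lt_of_le (by omega) h
    have hr1 : 1 ≤ θ * x / c := Nat.floor_pos.1 h1
    have h2 : (m : ℝ) ≤ θ * x / c := (Nat.le_floor_iff (by linarith)).1 h
    have h3 : (m : ℝ) * c ≤ θ * x := (le_div_iff₀ hc).1 h2
    rw [div_le_iff₀ hθ]
    linarith
  · intro h
    have h3 : (m : ℝ) * c ≤ θ * x := by
      have := (div_le_iff₀ hθ).1 h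
      linarith
    exact Nat.le_floor ((le_div_iff₀ hc).2 h3)

end SGGAux

open scoped Topology

/-- Convergence in distribution (in the product topology on `ℝ₊^∞`, i.e. of all
finite-dimensional marginals, tested against bounded continuous functions) of the
scaled stationary Jackson gaps to the product measure
`Exp(a−b) ⊗ Exp(a) ⊗ Exp(a) ⊗ ⋯`. -/
theorem scaled_geometric_gaps_tendsto_product_exponential
    (a b : ℝ) (hb : 0 < b) (hab : b < a)
    {Ω : Type*} [MeasurableSpace Ω] (μ : Measure Ω) [IsProbabilityMeasure μ]
    (Z : ℕ → ℕ → Ω → ℕ)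
    (hmeas : ∀ n i, Measurable (Z n i))
    (hpad : ∀ n i, n < i → ∀ ω, Z n i ω = 0)
    -- the coordinates `Z n 1, …, Z n n` are independent geometric random
    -- variables on `ℕ₀` with success probabilities `1 − ρ_i^{(n)}`:
    (htail : ∀ n, 1 ≤ n → ∀ m : ℕ → ℕ,
      μ {ω | ∀ i ∈ Icc 1 n, m i ≤ Z n i ω}
        = ∏ i ∈ Icc 1 n, ENNReal.ofReal
            ((∏ j ∈ Icc i n,
              (1 - a / (n : ℝ) ^ ((3 : ℝ) / 2)
                + if j = 1 then b / Real.sqrt n else 0)) ^ m i)) :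
    ∀ k : ℕ, 1 ≤ k → ∀ f : BoundedContinuousFunction (Fin k → ℝ) ℝ,
      Tendsto
        (fun n : ℕ => ∫ ω, f (fun i => (Z n (i + 1) ω : ℝ) / Real.sqrt n) ∂μ)
        atTop
        (nhds (∫ x, f x ∂ (Measure.pi fun i : Fin k =>
          ProbabilityTheory.expMeasure (if (i : ℕ) = 0 then a - b else a)))) := by
  intro k hk f
  have ha : 0 < a := hb.trans hab
  have hθpos : ∀ i : Fin k, 0 < SGG.th a b i := by
    intro i
    rw [SGG.th]
    split
    · linarith
    · exact ha
  set P : Measure (Fin k → ℝ) :=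
    Measure.pi (fun i : Fin k => ProbabilityTheory.expMeasure (if (i : ℕ) = 0 then a - b else a))
    with hP
  haveI hexp_prob : ∀ i : Fin k,
      IsProbabilityMeasure (ProbabilityTheory.expMeasure
        (if (i : ℕ) = 0 then a - b else (a:ℝ))) := fun i =>
    ProbabilityTheory.isProbabilityMeasure_expMeasure (by split <;> linarith)
  haveI hPprob : IsProbabilityMeasure P := by rw [hP]; infer_instance
  set W : ℕ → (Fin k → ℝ) → Fin k → ℝ := fun n x i =>
    (⌊SGG.th a b i * x i / SGG.cc a b n i⌋₊ : ℝ) / Real.sqrt n with hW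
  have hWmeas : ∀ n, Measurable (W n) := by
    intro n
    refine measurable_pi_lambda _ fun i => ?_
    have h1 : Measurable fun x : Fin k → ℝ => SGG.th a b i * x i / SGG.cc a b n i :=
      ((measurable_pi_apply i).const_mul _).div_const _
    exact (measurable_from_top.comp (Nat.measurable_floor.comp h1)).div_const _
  -- Step 1: dominated convergence on the coupled side
  have hDCT : Tendsto (fun n => ∫ x, f (W n x) ∂P) atTop (𝓝 (∫ x, f x ∂P)) := by
    refine tendsto_integral_of_dominated_convergence (fun _ => ‖f‖)
      (fun n => (f.continuous.measurable.comp (hWmeas n)).aestronglyMeasurable)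
      (integrable_const _)
      (fun n => Eventually.of_forall fun x => f.norm_coe_le_norm _) ?_
    have hset : P (Set.pi Set.univ fun _ : Fin k => Set.Ici (0:ℝ)) = 1 := by
      rw [hP, Measure.pi_pi]
      have h1 : ∀ i : Fin k,
          ProbabilityTheory.expMeasure (if (i:ℕ) = 0 then a - b else a) (Set.Ici (0:ℝ)) = 1 := by
        intro i
        rw [SGG.expMeasure_Ici (by split <;> linarith) le_rfl]
        simp
      simp [h1]
    have hae : ∀ᵐ x ∂P, ∀ i, (0:ℝ) ≤ x i := by
      rw [MeasureTheory.ae_iff]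
      have : {x : Fin k → ℝ | ¬ ∀ i, 0 ≤ x i}
          = (Set.pi Set.univ fun _ : Fin k => Set.Ici (0:ℝ))ᶜ := by
        ext x
        simp [Set.mem_pi, Pi.le_def, not_forall, not_le]
      rw [this, prob_compl_eq_zero_iff
        (MeasurableSet.univ_pi fun _ => measurableSet_Ici)]
      exact hset
    filter_upwards [hae] with x hx
    refine (f.continuous.tendsto x).comp (tendsto_pi_nhds.2 fun i => ?_)
    exact SGG.coord_tendsto (hθpos i) (hx i) (SGG.K1 a b hb hab i)
  -- Step 2: eventual equality of the two integral sequences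
  have hev : ∀ᶠ n : ℕ in atTop,
      (∫ ω, f (fun i : Fin k => (Z n ((i:ℕ) + 1) ω : ℝ) / Real.sqrt n) ∂μ)
        = ∫ x, f (W n x) ∂P := by
    have hccpos : ∀ᶠ n : ℕ in atTop, ∀ i : Fin k, 0 < SGG.cc a b n (i:ℕ) :=
      eventually_all.2 fun i => SGG.ev_cc_pos (hθpos i) (SGG.K1 a b hb hab (i:ℕ))
    filter_upwards [hccpos, SGG.ev_rho_pos a b hb, eventually_ge_atTop (max 1 k)]
      with n hcc hrho hn
    have hn1 : 1 ≤ n := le_trans (le_max_left _ _) hn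
    have hkn : k ≤ n := le_trans (le_max_right _ _) hn
    have hsq : 0 < Real.sqrt n := Real.sqrt_pos.2 (by exact_mod_cast hn1)
    have hVmeas : Measurable
        (fun ω => (fun i : Fin k => (Z n ((i:ℕ)+1) ω : ℝ) / Real.sqrt n)) :=
      measurable_pi_lambda _ fun i =>
        (measurable_from_top.comp (hmeas n ((i:ℕ)+1))).div_const _
    have hlaw : μ.map (fun ω => (fun i : Fin k => (Z n ((i:ℕ)+1) ω : ℝ) / Real.sqrt n))
        = P.map (W n) := by
      haveI h1 : IsProbabilityMeasure (μ.map
          (fun ω => (fun i : Fin k => (Z n ((i:ℕ)+1) ω : ℝ) / Real.sqrt n))) :=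
        Measure.isProbabilityMeasure_map hVmeas.aemeasurable
      haveI h2 : IsProbabilityMeasure (P.map (W n)) :=
        Measure.isProbabilityMeasure_map (hWmeas n).aemeasurable
      set C : Set (Set (Fin k → ℝ)) :=
        Set.pi Set.univ '' Set.pi Set.univ (fun _ : Fin k => Set.range (Set.Ici : ℝ → Set ℝ))
        with hC
      have hgen : (inferInstance : MeasurableSpace (Fin k → ℝ))
          = MeasurableSpace.generateFrom C := by
        rw [hC]
        refine (generateFrom_eq_pi (fun _ => ?_) (fun _ => ?_)).symm
        · exact (borel_eq_generateFrom_Ici ℝ).symm.trans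
            (BorelSpace.measurable_eq (α := ℝ)).symm
        · refine ⟨fun j => Set.Ici (-(j:ℝ)), fun j => ⟨_, rfl⟩, ?_⟩
          ext x
          simp only [Set.mem_iUnion, Set.mem_Ici, Set.mem_univ, iff_true]
          obtain ⟨j, hj⟩ := exists_nat_ge (-x)
          exact ⟨j, by linarith⟩
      have hpiC : IsPiSystem C := by
        rintro s ⟨g, hg, rfl⟩ u ⟨g', hg', rfl⟩ -
        choose r hr using fun i => hg i (Set.mem_univ i)
        choose r' hr' using fun i => hg' i (Set.mem_univ i)
        refine ⟨fun i => Set.Ici (max (r i) (r' i)), fun i _ => ⟨_, rfl⟩, ?_⟩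
        rw [← Set.pi_inter_distrib]
        refine congrArg _ (funext fun i => ?_)
        rw [← hr i, ← hr' i, Set.Ici_inter_Ici]
      refine MeasureTheory.ext_of_generate_finite C hgen hpiC ?_
        (by rw [measure_univ, measure_univ])
      rintro s ⟨g, hg, rfl⟩
      choose t ht using fun i => hg i (Set.mem_univ i)
      have hgeq : g = fun i => Set.Ici (t i) := funext fun i => (ht i).symm
      rw [hgeq]
      have hSmeas : MeasurableSet (Set.pi Set.univ fun i => Set.Ici (t i)) :=
        MeasurableSet.univ_pi fun _ => measurableSet_Ici
      set m' : ℕ → ℕ := fun j =>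
        if h : 1 ≤ j ∧ j ≤ k then ⌈Real.sqrt n * t ⟨j - 1, by omega⟩⌉₊ else 0 with hm'
      have hm'succ : ∀ i : Fin k, m' ((i:ℕ) + 1) = ⌈Real.sqrt n * t i⌉₊ := by
        intro i
        have hcond : 1 ≤ (i:ℕ)+1 ∧ (i:ℕ)+1 ≤ k := ⟨by omega, by omega⟩
        rw [hm']
        simp only []
        rw [dif_pos hcond]
        congr 1
      rw [Measure.map_apply hVmeas hSmeas, Measure.map_apply (hWmeas n) hSmeas]
      have hpre : (fun ω => (fun i : Fin k => (Z n ((i:ℕ)+1) ω : ℝ) / Real.sqrt n)) ⁻¹'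
          (Set.pi Set.univ fun i => Set.Ici (t i))
          = {ω | ∀ j ∈ Finset.Icc 1 n, m' j ≤ Z n j ω} := by
        ext ω
        simp only [Set.mem_preimage, Set.mem_pi, Set.mem_univ, forall_const, Set.mem_Ici,
          Set.mem_setOf_eq, forall_true_left]
        constructor
        · intro h j hj
          rw [Finset.mem_Icc] at hj
          by_cases hjk : j ≤ k
          · have hidx : j - 1 < k := by omega
            have h2 := h ⟨j - 1, hidx⟩
            have hval : ((⟨j - 1, hidx⟩ : Fin k) : ℕ) + 1 = j := by simp; omega
            rw [hval] at h2
            rw [hm']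
            simp only []
            rw [dif_pos ⟨hj.1, hjk⟩]
            exact (SGG.ceil_tail hsq _).1 h2
          · rw [hm']
            simp only []
            rw [dif_neg (by omega)]
            exact Nat.zero_le _
        · intro h i
          have h2 := h ((i:ℕ)+1) (Finset.mem_Icc.2 ⟨by omega, by omega⟩)
          rw [hm'succ i] at h2
          exact (SGG.ceil_tail hsq _).2 h2
      have hpreW : (W n) ⁻¹' (Set.pi Set.univ fun i => Set.Ici (t i))
          = Set.pi Set.univ (fun i : Fin k =>
              if m' ((i:ℕ)+1) = 0 then Set.univ
              else Set.Ici ((m' ((i:ℕ)+1) : ℝ) * SGG.cc a b n i / SGG.th a b i)) := by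
        ext x
        simp only [Set.mem_preimage, Set.mem_pi, Set.mem_univ, forall_const, Set.mem_Ici,
          forall_true_left]
        refine forall_congr' fun i => ?_
        rw [hW]
        simp only []
        rw [hm'succ i, SGG.ceil_tail hsq]
        rcases Nat.eq_zero_or_pos ⌈Real.sqrt n * t i⌉₊ with h0 | h0
        · rw [h0, if_pos rfl]
          simp [Nat.zero_le]
        · rw [if_neg (by omega), SGG.floor_tail (hθpos i) (hcc i) h0]
          simp
      have hrhoeq : ∀ j, (∏ l ∈ Finset.Icc j n,
          (1 - a / (n : ℝ) ^ ((3 : ℝ) / 2) + if l = 1 then b / Real.sqrt n else 0))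
          = SGG.rho a b n j := fun j => rfl
      rw [hpre, htail n hn1 m', hpreW, hP, Measure.pi_pi]
      simp only [hrhoeq]
      have hcoord : ∀ i : Fin k,
          ProbabilityTheory.expMeasure (if (i:ℕ) = 0 then a - b else a)
            (if m' ((i:ℕ)+1) = 0 then Set.univ
              else Set.Ici ((m' ((i:ℕ)+1) : ℝ) * SGG.cc a b n i / SGG.th a b i))
          = ENNReal.ofReal ((SGG.rho a b n ((i:ℕ)+1)) ^ (m' ((i:ℕ)+1))) := by
        intro i
        rw [show (if (i:ℕ) = 0 then a - b else a) = SGG.th a b (i:ℕ) from rfl]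
        rcases Nat.eq_zero_or_pos (m' ((i:ℕ)+1)) with h0 | h0
        · rw [h0, if_pos rfl, pow_zero, ENNReal.ofReal_one]
          exact (hexp_prob i).measure_univ
        · rw [if_neg (Nat.pos_iff_ne_zero.1 h0),
            SGG.expMeasure_Ici (hθpos i)
              (div_nonneg (mul_nonneg (Nat.cast_nonneg _) (hcc i).le) (hθpos i).le)]
          congr 1
          have hθne : SGG.th a b (i:ℕ) ≠ 0 := ne_of_gt (hθpos i)
          have he1 : SGG.th a b (i:ℕ)
              * ((m' ((i:ℕ)+1) : ℝ) * SGG.cc a b n i / SGG.th a b i)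
              = (m' ((i:ℕ)+1) : ℝ) * SGG.cc a b n i := by
            field_simp
          rw [he1, SGG.cc]
          rw [show -((m' ((i:ℕ)+1) : ℝ) * -Real.log (SGG.rho a b n ((i:ℕ)+1)))
            = (m' ((i:ℕ)+1) : ℝ) * Real.log (SGG.rho a b n ((i:ℕ)+1)) by ring]
          rw [Real.exp_nat_mul, Real.exp_log (hrho ((i:ℕ)+1))]
      have hprod1 : ∏ j ∈ Finset.Icc 1 k, ENNReal.ofReal ((SGG.rho a b n j) ^ m' j)
          = ∏ j ∈ Finset.Icc 1 n, ENNReal.ofReal ((SGG.rho a b n j) ^ m' j) := by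
        refine Finset.prod_subset (Finset.Icc_subset_Icc_right hkn) (fun j hj hj' => ?_)
        rw [Finset.mem_Icc] at hj
        rw [Finset.mem_Icc] at hj'
        have hcond : ¬ (1 ≤ j ∧ j ≤ k) := by omega
        rw [hm']
        simp only []
        rw [dif_neg hcond, pow_zero, ENNReal.ofReal_one]
      have hprod2 : ∏ j ∈ Finset.Icc 1 k, ENNReal.ofReal ((SGG.rho a b n j) ^ m' j)
          = ∏ i : Fin k, ENNReal.ofReal ((SGG.rho a b n ((i:ℕ)+1)) ^ m' ((i:ℕ)+1)) := by
        rw [← Finset.Ico_add_one_right_eq_Icc, Finset.prod_Ico_eq_prod_range]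
        rw [Finset.prod_range (fun i =>
          ENNReal.ofReal ((SGG.rho a b n (1+i)) ^ m' (1+i)))]
        exact Finset.prod_congr rfl (fun i _ => by rw [Nat.add_comm])
      rw [← hprod1, hprod2]
      exact Finset.prod_congr rfl (fun i _ => (hcoord i).symm)
    rw [← integral_map hVmeas.aemeasurable f.continuous.aestronglyMeasurable, hlaw,
      integral_map (hWmeas n).aemeasurable f.continuous.aestronglyMeasurable]
  exact hDCT.congr' (EventuallyEq.symm hev)
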